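/- arXiv:2010.02868 — 5 statements merged into one kernel-verified Lean document; each statement's English description precedes it below -/
import Mathlib

section
/- (Deep Chapman–Kolmogorov equation.) Let X be a finite nonempty set, let n ≥ 1, fix current states x^1,…,x^n ∈ X, and let T : X → PMF(X) assign to each state a transition distribution over next states. Let ξ^1,…,ξ^n be independent random variables with ξ^i distributed according to T(x^i) (joint distribution the product PMF ∏_{i=1}^n T(x^i)). Fix x' ∈ X and for each x ∈ X let m_x = |{i : x^i = x}|. Then the random count N(x') = Σ_{i=1}^n 1{ξ^i = x'} of agents whose next state is x' is distributed as the sum of |X| independent binomial random variables N_x ~ Binomial(m_x, T(x)(x')), x ∈ X. Formally, the pushforward of ∏_{i=1}^n T(x^i) under the map (ξ^1,…,ξ^n) ↦ N(x') equals the pushforward, under the map (k_x)_{x∈X} ↦ Σ_{x∈X} k_x, of the product over x ∈ X of the binomial PMFs Binomial(m_x, T(x)(x')); that is, it equals the convolution of these binomial PMFs. -/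
/-!
STATEMENT 3 (Deep Chapman–Kolmogorov equation): with next states `ξ i ~ T (x i)`
independent, the count `N(x') = Σ_i 1{ξ i = x'}` is distributed as the convolution
(over `a ∈ X`) of the binomial PMFs `Binomial(m_a, T a x')`, `m_a = |{i : x i = a}|`.
The pushforward of the product PMF under the count map, evaluated at `k`, equals the
sum over tuples `(κ_a)_{a ∈ X}` with `Σ_a κ_a = k` of the product of binomial masses.
-/

open Finset

open Polynomial in
private lemma coeff_sum_C_mul_X_pow {ι : Type*} [DecidableEq ι] (s : Finset ι)
    (c : ι → ℝ) (e : ι → ℕ) (k : ℕ) :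
    (∑ i ∈ s, C (c i) * X ^ e i).coeff k = ∑ i ∈ s.filter (fun i => e i = k), c i := by
  rw [finset_sum_coeff, Finset.sum_filter]
  refine Finset.sum_congr rfl fun i _ => ?_
  rw [coeff_C_mul, coeff_X_pow]
  by_cases h : e i = k
  · simp [h]
  · rw [if_neg (fun hk => h hk.symm), mul_zero, if_neg h]

theorem deep_chapman_kolmogorov
    {X : Type*} [Fintype X] [Nonempty X] [DecidableEq X]
    (n : ℕ) (hn : 1 ≤ n) (x : Fin n → X) (T : X → X → ℝ)
    (hT0 : ∀ a b, 0 ≤ T a b) (hT1 : ∀ a, ∑ b, T a b = 1)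
    (x' : X) (k : ℕ) :
    ∑ ξ ∈ Finset.univ.filter
        (fun ξ : Fin n → X => (Finset.univ.filter (fun i => ξ i = x')).card = k),
      ∏ i, T (x i) (ξ i)
    = ∑ κ ∈ (Fintype.piFinset (fun _ : X => Finset.range (k + 1))).filter
          (fun κ : X → ℕ => ∑ a, κ a = k),
        ∏ a : X,
          (((Finset.univ.filter (fun i => x i = a)).card.choose (κ a) : ℝ)
            * (T a x') ^ (κ a)
            * (1 - T a x') ^ ((Finset.univ.filter (fun i => x i = a)).card - κ a)) := by
  classical
    set m : X → ℕ := fun a => (Finset.univ.filter (fun i => x i = a)).card with hm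
  set p : X → ℝ := fun a => T a x' with hp
  set binom : X → ℕ → ℝ :=
    fun a j => ((m a).choose j : ℝ) * p a ^ j * (1 - p a) ^ (m a - j) with hbinom
  -- Step A: per-state factor of the generating polynomial
  have keyA : ∀ a : X, (∑ b : X, Polynomial.C (T a b) * Polynomial.X ^ (if b = x' then 1 else 0))
      = Polynomial.C (1 - p a) + Polynomial.C (p a) * Polynomial.X := by
    intro a
    rw [← Finset.sum_filter_add_sum_filter_not Finset.univ (fun b => b = x')]
    have h1 : Finset.univ.filter (fun b => b = x') = {x'} := by
      ext b; simp
    have h2 : ∑ b ∈ Finset.univ.filter (fun b => ¬ b = x'), T a b = 1 - T a x' := by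
      have h3 := hT1 a
      rw [← Finset.sum_filter_add_sum_filter_not Finset.univ (fun b => b = x'), h1,
        Finset.sum_singleton] at h3
      linarith
    have h4 : ∑ b ∈ Finset.univ.filter (fun b => ¬ b = x'),
        Polynomial.C (T a b) * Polynomial.X ^ (if b = x' then 1 else 0) = Polynomial.C (1 - p a) := by
      rw [hp, ← h2, map_sum]
      refine Finset.sum_congr rfl fun b hb => ?_
      rw [Finset.mem_filter] at hb
      rw [if_neg hb.2, pow_zero, mul_one]
    rw [h1, Finset.sum_singleton, if_pos rfl, h4, pow_one, add_comm]
  -- Step B: LHS as a coefficient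
  have hQ : (∏ i, (Polynomial.C (1 - p (x i)) + Polynomial.C (p (x i)) * Polynomial.X)).coeff k
      = ∑ ξ ∈ Finset.univ.filter
          (fun ξ : Fin n → X => (Finset.univ.filter (fun i => ξ i = x')).card = k),
        ∏ i, T (x i) (ξ i) := by
    have e1 : ∏ i, (Polynomial.C (1 - p (x i)) + Polynomial.C (p (x i)) * Polynomial.X)
        = ∑ ξ ∈ Fintype.piFinset (fun _ : Fin n => (Finset.univ : Finset X)),
            Polynomial.C (∏ i, T (x i) (ξ i)) * Polynomial.X ^ ((Finset.univ.filter (fun i => ξ i = x')).card) := by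
      simp_rw [← keyA]
      rw [Finset.prod_univ_sum]
      refine Finset.sum_congr rfl fun ξ _ => ?_
      rw [Finset.prod_mul_distrib, ← map_prod, Finset.prod_pow_eq_pow_sum]
      congr 1
      rw [Finset.card_filter]
    rw [e1, coeff_sum_C_mul_X_pow, Fintype.piFinset_univ]
  -- Step C: grouping by fibers
  have hfib : ∏ i, (Polynomial.C (1 - p (x i)) + Polynomial.C (p (x i)) * Polynomial.X)
      = ∏ a : X, (Polynomial.C (1 - p a) + Polynomial.C (p a) * Polynomial.X) ^ m a := by
    rw [Finset.prod_comp (fun a => Polynomial.C (1 - p a) + Polynomial.C (p a) * Polynomial.X) x]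
    refine Finset.prod_subset (Finset.subset_univ _) fun a _ ha => ?_
    have hma : (Finset.univ.filter (fun i => x i = a)).card = 0 := by
      simp only [Finset.card_eq_zero, Finset.filter_eq_empty_iff]
      intro i _ h
      exact ha (Finset.mem_image.mpr ⟨i, Finset.mem_univ i, h⟩)
    rw [hma, pow_zero]
  -- Step D: binomial expansion of each factor
  have hbin : ∀ a : X, (Polynomial.C (1 - p a) + Polynomial.C (p a) * Polynomial.X) ^ m a
      = ∑ j ∈ Finset.range (m a + 1), Polynomial.C (binom a j) * Polynomial.X ^ j := by
    intro a
    rw [add_comm, add_pow]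
    refine Finset.sum_congr rfl fun j _ => ?_
    simp only [hbinom, Polynomial.C_mul, Polynomial.C_pow, Polynomial.C_eq_natCast]
    ring
  -- Step E: coefficient of the product of binomial polynomials
  have hE : (∏ a : X, ∑ j ∈ Finset.range (m a + 1), Polynomial.C (binom a j) * Polynomial.X ^ j).coeff k
      = ∑ κ ∈ (Fintype.piFinset (fun a : X => Finset.range (m a + 1))).filter
            (fun κ : X → ℕ => ∑ a, κ a = k), ∏ a, binom a (κ a) := by
    rw [Finset.prod_univ_sum]
    have e2 : ∀ κ : X → ℕ, (∏ a : X, Polynomial.C (binom a (κ a)) * Polynomial.X ^ κ a)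
        = Polynomial.C (∏ a, binom a (κ a)) * Polynomial.X ^ (∑ a, κ a) := fun κ => by
      rw [Finset.prod_mul_distrib, ← map_prod, Finset.prod_pow_eq_pow_sum]
    simp_rw [e2]
    rw [coeff_sum_C_mul_X_pow]
  -- Step F: change of summation box
  have hbox : ∑ κ ∈ (Fintype.piFinset (fun a : X => Finset.range (m a + 1))).filter
          (fun κ : X → ℕ => ∑ a, κ a = k), ∏ a, binom a (κ a)
      = ∑ κ ∈ (Fintype.piFinset (fun _ : X => Finset.range (k + 1))).filter
          (fun κ : X → ℕ => ∑ a, κ a = k), ∏ a, binom a (κ a) := by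
    refine Finset.sum_subset ?_ ?_
    · intro κ hκ
      rw [Finset.mem_filter] at hκ ⊢
      refine ⟨?_, hκ.2⟩
      rw [Fintype.mem_piFinset]
      intro a
      rw [Finset.mem_range, Nat.lt_succ_iff, ← hκ.2]
      exact Finset.single_le_sum (fun i _ => Nat.zero_le _) (Finset.mem_univ a)
    · intro κ hκ hκ'
      rw [Finset.mem_filter] at hκ
      have : ¬ κ ∈ Fintype.piFinset (fun a : X => Finset.range (m a + 1)) := by
        intro h
        exact hκ' (Finset.mem_filter.mpr ⟨h, hκ.2⟩)
      rw [Fintype.mem_piFinset] at this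
      push_neg at this
      obtain ⟨a, ha⟩ := this
      rw [Finset.mem_range, Nat.lt_succ_iff, not_le] at ha
      refine Finset.prod_eq_zero (Finset.mem_univ a) ?_
      rw [hbinom]
      simp [Nat.choose_eq_zero_of_lt ha]
  calc
    ∑ ξ ∈ Finset.univ.filter
        (fun ξ : Fin n → X => (Finset.univ.filter (fun i => ξ i = x')).card = k),
      ∏ i, T (x i) (ξ i)
      = (∏ i, (Polynomial.C (1 - p (x i)) + Polynomial.C (p (x i)) * Polynomial.X)).coeff k := hQ.symm
    _ = (∏ a : X, ∑ j ∈ Finset.range (m a + 1), Polynomial.C (binom a j) * Polynomial.X ^ j).coeff k := by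
        rw [hfib, Finset.prod_congr rfl fun a _ => hbin a]
    _ = ∑ κ ∈ (Fintype.piFinset (fun a : X => Finset.range (m a + 1))).filter
            (fun κ : X → ℕ => ∑ a, κ a = k), ∏ a, binom a (κ a) := hE
    _ = ∑ κ ∈ (Fintype.piFinset (fun _ : X => Finset.range (k + 1))).filter
            (fun κ : X → ℕ => ∑ a, κ a = k), ∏ a, binom a (κ a) := hbox
end

section
/- (Orthonormal-feature Pythagorean decomposition of quadratic costs.) Let n, z, h ∈ ℕ with n ≥ 1, and let α : {1,…,n} → {1,…,z} → ℝ satisfy the orthonormality condition (1/n)·Σ_{i=1}^n α^{i,j}·α^{i,k} = 1 if j = k and 0 if j ≠ k, for all j,k ∈ {1,…,z}. Given vectors x^1,…,x^n ∈ ℝ^h, define x̄^j = (1/n)·Σ_{i=1}^n α^{i,j}·x^i for j ∈ {1,…,z} and Δx^i = x^i − Σ_{j=1}^z α^{i,j}·x̄^j for i ∈ {1,…,n}. Then for every h × h real matrix Q: (1/n)·Σ_{i=1}^n (x^i)ᵀ Q x^i = (1/n)·Σ_{i=1}^n (Δx^i)ᵀ Q Δx^i + Σ_{j=1}^z (x̄^j)ᵀ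 Q x̄^j. -/
/-!
STATEMENT 5 (Orthonormal-feature Pythagorean decomposition of quadratic costs):
with orthonormal impact factors α, weighted averages x̄ʲ and deviations Δxⁱ,
`(1/n) Σ_i (xⁱ)ᵀ Q xⁱ = (1/n) Σ_i (Δxⁱ)ᵀ Q Δxⁱ + Σ_j (x̄ʲ)ᵀ Q x̄ʲ`.
-/

open Matrix Finset

/-- The `j`-th weighted average `v̄ʲ = (1/n) Σ_i αⁱʲ vⁱ`. -/
noncomputable def wavg {n z h : ℕ} (α : Fin n → Fin z → ℝ)
    (v : Fin n → Fin h → ℝ) (j : Fin z) : Fin h → ℝ :=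
  (1 / n : ℝ) • ∑ i, α i j • v i

/-- The gauge-transformed deviation `Δvⁱ = vⁱ − Σ_j αⁱʲ v̄ʲ`. -/
noncomputable def dev {n z h : ℕ} (α : Fin n → Fin z → ℝ)
    (v : Fin n → Fin h → ℝ) (i : Fin n) : Fin h → ℝ :=
  v i - ∑ j, α i j • wavg α v j

theorem quadratic_cost_pythagorean_decomposition
    {n z h : ℕ} (hn : 1 ≤ n) (α : Fin n → Fin z → ℝ)
    (horth : ∀ j k : Fin z,
      (1 / n : ℝ) * ∑ i, α i j * α i k = if j = k then 1 else 0)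
    (x : Fin n → Fin h → ℝ) (Q : Matrix (Fin h) (Fin h) ℝ) :
    (1 / n : ℝ) * ∑ i, (x i) ⬝ᵥ Q.mulVec (x i)
      = (1 / n : ℝ) * ∑ i, (dev α x i) ⬝ᵥ Q.mulVec (dev α x i)
        + ∑ j, (wavg α x j) ⬝ᵥ Q.mulVec (wavg α x j) := by
  set w : Fin z → Fin h → ℝ := wavg α x with hw
  set B : (Fin h → ℝ) → (Fin h → ℝ) → ℝ := fun u v => u ⬝ᵥ Q.mulVec v with hB
  have Bsl : ∀ (r : ℝ) u v, B (r • u) v = r * B u v := by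
    intro r u v; simp [hB, smul_dotProduct, smul_eq_mul]
  have Bsr : ∀ (r : ℝ) u v, B u (r • v) = r * B u v := by
    intro r u v; simp [hB, Matrix.mulVec_smul, dotProduct_smul, smul_eq_mul]
  have Bsub_l : ∀ u v c, B (u - v) c = B u c - B v c := by
    intro u v c; simp [hB, sub_dotProduct]
  have Bsub_r : ∀ c u v, B c (u - v) = B c u - B c v := by
    intro c u v; simp [hB, Matrix.mulVec_sub, dotProduct_sub]
  have Bsum_l : ∀ {ι : Type} (s : Finset ι) (f : ι → Fin h → ℝ) (c),
      B (∑ i ∈ s, f i) c = ∑ i ∈ s, B (f i) c := by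
    intro ι s f c
    classical
    induction s using Finset.induction with
    | empty => simp [hB]
    | insert _ _ hne ih =>
        rw [Finset.sum_insert hne, Finset.sum_insert hne, ← ih]
        simp [hB, add_dotProduct]
  have Bsum_r : ∀ {ι : Type} (s : Finset ι) (c) (f : ι → Fin h → ℝ),
      B c (∑ i ∈ s, f i) = ∑ i ∈ s, B c (f i) := by
    intro ι s c f
    classical
    induction s using Finset.induction with
    | empty => simp [hB]
    | insert _ _ hne ih =>
        rw [Finset.sum_insert hne, Finset.sum_insert hne, ← ih]
        simp [hB, Matrix.mulVec_add, dotProduct_add]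
  have hwj : ∀ j, (1 / n : ℝ) • ∑ i, α i j • x i = w j := fun j => rfl
  -- cross term 1
  have hc1 : (1 / n : ℝ) * ∑ i, B (x i) (∑ j, α i j • w j) = ∑ j, B (w j) (w j) := by
    have : ∑ i, B (x i) (∑ j, α i j • w j)
        = ∑ j, B (∑ i, α i j • x i) (w j) := by
      simp only [Bsum_r, Bsr]
      rw [Finset.sum_comm]
      simp only [Bsum_l, Bsl]
    rw [this, Finset.mul_sum]
    refine Finset.sum_congr rfl fun j _ => ?_
    rw [← Bsl, hwj]
  -- cross term 2
  have hc2 : (1 / n : ℝ) * ∑ i, B (∑ j, α i j • w j) (x i) = ∑ j, B (w j) (w j) := by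
    have : ∑ i, B (∑ j, α i j • w j) (x i)
        = ∑ j, B (w j) (∑ i, α i j • x i) := by
      simp only [Bsum_l, Bsl]
      rw [Finset.sum_comm]
      simp only [Bsum_r, Bsr]
    rw [this, Finset.mul_sum]
    refine Finset.sum_congr rfl fun j _ => ?_
    rw [← Bsr, hwj]
  -- square term
  have hsq : (1 / n : ℝ) * ∑ i, B (∑ j, α i j • w j) (∑ k, α i k • w k)
      = ∑ j, B (w j) (w j) := by
    have : ∑ i, B (∑ j, α i j • w j) (∑ k, α i k • w k)
        = ∑ j, ∑ k, (∑ i, α i j * α i k) * B (w j) (w k) := by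
      simp only [Bsum_l, Bsum_r, Bsl, Bsr, Finset.mul_sum, Finset.sum_mul]
      rw [Finset.sum_comm]
      refine Finset.sum_congr rfl fun j _ => ?_
      rw [Finset.sum_comm]
      refine Finset.sum_congr rfl fun k _ => ?_
      refine Finset.sum_congr rfl fun i _ => by ring
    rw [this, Finset.mul_sum]
    have : ∀ j : Fin z, (1 / n : ℝ) * ∑ k, (∑ i, α i j * α i k) * B (w j) (w k)
        = B (w j) (w j) := by
      intro j
      rw [Finset.mul_sum]
      have : ∀ k : Fin z, (1 / n : ℝ) * ((∑ i, α i j * α i k) * B (w j) (w k))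
          = (if j = k then 1 else 0) * B (w j) (w k) := by
        intro k; rw [← mul_assoc, horth j k]
      simp only [this, ite_mul, one_mul, zero_mul, Finset.sum_ite_eq, Finset.mem_univ,
        if_true]
    exact Finset.sum_congr rfl fun j _ => this j
  -- expand dev
  have hdev : ∀ i, B (dev α x i) (dev α x i)
      = B (x i) (x i) - B (x i) (∑ j, α i j • w j)
        - B (∑ j, α i j • w j) (x i) + B (∑ j, α i j • w j) (∑ j, α i j • w j) := by
    intro i
    simp only [dev, hw, Bsub_l, Bsub_r]
    ring
  show (1 / n : ℝ) * ∑ i, B (x i) (x i)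
      = (1 / n : ℝ) * ∑ i, B (dev α x i) (dev α x i) + ∑ j, B (w j) (w j)
  simp only [hdev]
  rw [Finset.sum_add_distrib, Finset.sum_sub_distrib, Finset.sum_sub_distrib]
  rw [mul_add, mul_sub, mul_sub, hc1, hc2, hsq]
  ring
end

section
/- (Decoupling of the deviation dynamics under the gauge transformation.) Let n, z, h_x, h_u ∈ ℕ with n ≥ 1, and let α : {1,…,n} → {1,…,z} → ℝ satisfy the orthonormality condition (1/n)·Σ_{i=1}^n α^{i,j}·α^{i,k} = 1 if j = k and 0 if j ≠ k. Let A be an h_x × h_x real matrix, B an h_x × h_u real matrix, and for each j ∈ {1,…,z} let Ā^j be an h_x × (z·h_x) real matrix and B̄^j an h_x × (z·h_u) real matrix. Given vectors x^i, w^i ∈ ℝ^{h_x} and u^i ∈ ℝ^{h_u} for i ∈ {1,…,n}, define the weighted averages x̄^j, ū^j, w̄^j, the stacked vectors 𝐱̄ = (x̄^1;…;x̄^z) ∈ ℝ^{z·h_x} and 𝐮̄ = (ū^1;…;ū^z) ∈ ℝ^{z·h_u}, and the deviations Δx^i, Δu^i, Δw^i. Suppose the next states are given by x'^i = A x^i +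 B u^i + Σ_{j=1}^z α^{i,j}·(Ā^j 𝐱̄ + B̄^j 𝐮̄) + w^i for each i. Then the deviations of the next states satisfy the decoupled linear dynamics Δx'^i = A Δx^i + B Δu^i + Δw^i for every i ∈ {1,…,n}. -/
/-!
STATEMENT 7 (Decoupling of the deviation dynamics under the gauge transformation):
if `x'ⁱ = A xⁱ + B uⁱ + Σ_j αⁱʲ (Āʲ 𝐱̄ + B̄ʲ 𝐮̄) + wⁱ` with orthonormal impact
factors α, then `Δx'ⁱ = A Δxⁱ + B Δuⁱ + Δwⁱ` for every agent `i`.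
-/

open Matrix Finset

/-- The stacked vector (deep state) `𝐯̄ = (v̄¹;…;v̄ᶻ) ∈ ℝ^{z·h}`. -/
noncomputable def stacked {n z h : ℕ} (α : Fin n → Fin z → ℝ)
    (v : Fin n → Fin h → ℝ) : Fin z × Fin h → ℝ :=
  fun p => wavg α v p.1 p.2

lemma wavg_add {n z h : ℕ} (α : Fin n → Fin z → ℝ)
    (v w : Fin n → Fin h → ℝ) (j : Fin z) :
    wavg α (fun i => v i + w i) j = wavg α v j + wavg α w j := by
  unfold wavg
  rw [← smul_add, ← Finset.sum_add_distrib]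
  simp [smul_add]

lemma wavg_mulVec {n z h h' : ℕ} (α : Fin n → Fin z → ℝ)
    (M : Matrix (Fin h') (Fin h) ℝ) (v : Fin n → Fin h → ℝ) (j : Fin z) :
    wavg α (fun i => M.mulVec (v i)) j = M.mulVec (wavg α v j) := by
  unfold wavg
  rw [Matrix.mulVec_smul]
  congr 1
  rw [show (M.mulVec (∑ i, α i j • v i)) = M.mulVecLin (∑ i, α i j • v i) from rfl,
    map_sum]
  simp [Matrix.mulVec_smul]

lemma wavg_coupling {n z h : ℕ} (α : Fin n → Fin z → ℝ)
    (horth : ∀ j k : Fin z,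
      (1 / n : ℝ) * ∑ i, α i j * α i k = if j = k then 1 else 0)
    (C : Fin z → Fin h → ℝ) (k : Fin z) :
    wavg α (fun i => ∑ j, α i j • C j) k = C k := by
  unfold wavg
  have : ∀ i : Fin n, α i k • ∑ j, α i j • C j = ∑ j, (α i k * α i j) • C j := by
    intro i; rw [Finset.smul_sum]; simp [smul_smul]
  simp only [this]
  rw [Finset.sum_comm, Finset.smul_sum]
  have h2 : ∀ j : Fin z, (1/n:ℝ) • ∑ i, (α i k * α i j) • C j
      = (if k = j then (1:ℝ) else 0) • C j := by
    intro j
    rw [← Finset.sum_smul, smul_smul, ← horth k j]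
  simp only [h2]
  simp

theorem deviation_dynamics_decoupling
    {n z hx hu : ℕ} (hn : 1 ≤ n) (α : Fin n → Fin z → ℝ)
    (horth : ∀ j k : Fin z,
      (1 / n : ℝ) * ∑ i, α i j * α i k = if j = k then 1 else 0)
    (A : Matrix (Fin hx) (Fin hx) ℝ) (B : Matrix (Fin hx) (Fin hu) ℝ)
    (Abar : Fin z → Matrix (Fin hx) (Fin z × Fin hx) ℝ)
    (Bbar : Fin z → Matrix (Fin hx) (Fin z × Fin hu) ℝ)
    (x w x' : Fin n → Fin hx → ℝ) (u : Fin n → Fin hu → ℝ)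
    (hdyn : ∀ i, x' i
      = A.mulVec (x i) + B.mulVec (u i)
        + ∑ j, α i j • ((Abar j).mulVec (stacked α x) + (Bbar j).mulVec (stacked α u))
        + w i) :
    ∀ i, dev α x' i = A.mulVec (dev α x i) + B.mulVec (dev α u i) + dev α w i := by
  intro i
  set C : Fin z → Fin hx → ℝ :=
    fun j => (Abar j).mulVec (stacked α x) + (Bbar j).mulVec (stacked α u) with hC
  have hw : ∀ k, wavg α x' k
      = A.mulVec (wavg α x k) + B.mulVec (wavg α u k) + C k + wavg α w k := by
    intro k
    have hx' : x' = fun i =>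
        (fun i => A.mulVec (x i) + B.mulVec (u i) + ∑ j, α i j • C j) i + w i := by
      funext i; exact hdyn i
    rw [hx', wavg_add, wavg_add (v := fun i => A.mulVec (x i) + B.mulVec (u i))]
    rw [wavg_add (v := fun i => A.mulVec (x i)) (w := fun i => B.mulVec (u i))]
    rw [wavg_mulVec, wavg_mulVec, wavg_coupling α horth]
  unfold dev
  simp only [hw, hdyn i]
  have hAx : A.mulVec (x i - ∑ j, α i j • wavg α x j)
      = A.mulVec (x i) - ∑ j, α i j • A.mulVec (wavg α x j) := by
    rw [Matrix.mulVec_sub]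
    congr 1
    rw [show A.mulVec (∑ j, α i j • wavg α x j) = A.mulVecLin _ from rfl, map_sum]
    simp [Matrix.mulVec_smul]
  have hBu : B.mulVec (u i - ∑ j, α i j • wavg α u j)
      = B.mulVec (u i) - ∑ j, α i j • B.mulVec (wavg α u j) := by
    rw [Matrix.mulVec_sub]
    congr 1
    rw [show B.mulVec (∑ j, α i j • wavg α u j) = B.mulVecLin _ from rfl, map_sum]
    simp [Matrix.mulVec_smul]
  rw [hAx, hBu]
  simp only [hC, smul_add, Finset.sum_add_distrib]
  abel
end

section
/- (Dynamics of the deep state.) Let n, z, h_x, h_u ∈ ℕ with n ≥ 1, and let α : {1,…,n} → {1,…,z} → ℝ satisfy the orthonormality condition (1/n)·Σ_{i=1}^n α^{i,j}·α^{i,k} = 1 if j = k and 0 if j ≠ k. Let A be an h_x × h_x real matrix, B an h_x × h_u real matrix, and for each j ∈ {1,…,z} let Ā^j be an h_x × (z·h_x) real matrix and B̄^j an h_x × (z·h_u) real matrix. Define the (z·h_x) × (z·h_x) matrix 𝐀̄ = diag(A,…,A) + row(Ā^1,…,Ā^z) and the (z·h_x) × (z·h_u) matrix 𝐁̄ = diag(B,…,B)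 + row(B̄^1,…,B̄^z). Given vectors x^i, w^i ∈ ℝ^{h_x} and u^i ∈ ℝ^{h_u}, define the stacked weighted averages 𝐱̄, 𝐮̄, 𝐰̄, and suppose the next states are x'^i = A x^i + B u^i + Σ_{j=1}^z α^{i,j}·(Ā^j 𝐱̄ + B̄^j 𝐮̄) + w^i. Then the next deep state satisfies 𝐱̄' = 𝐀̄ 𝐱̄ + 𝐁̄ 𝐮̄ + 𝐰̄, where 𝐱̄' is the stacked vector of weighted averages (x̄'^1;…;x̄'^z) of the next states. -/
/-!
STATEMENT 8 (Dynamics of the deep state): with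
`𝐀̄ = diag(A,…,A) + row(Ā¹,…,Āᶻ)` and `𝐁̄ = diag(B,…,B) + row(B̄¹,…,B̄ᶻ)`,
if `x'ⁱ = A xⁱ + B uⁱ + Σ_j αⁱʲ (Āʲ 𝐱̄ + B̄ʲ 𝐮̄) + wⁱ`, then the next deep state
satisfies `𝐱̄' = 𝐀̄ 𝐱̄ + 𝐁̄ 𝐮̄ + 𝐰̄`.
-/

open Matrix Finset

/-- `diag(M,…,M) + row(M¹,…,Mᶻ)`: the z-fold block-diagonal matrix built from `M`
plus the matrix whose block-row `j` is `Mʲ`. -/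
def diagPlusRow {z h h' : ℕ} (M : Matrix (Fin h) (Fin h') ℝ)
    (Mbar : Fin z → Matrix (Fin h) (Fin z × Fin h') ℝ) :
    Matrix (Fin z × Fin h) (Fin z × Fin h') ℝ :=
  Matrix.of fun p q => (if p.1 = q.1 then M p.2 q.2 else 0) + Mbar p.1 p.2 q

/-- Componentwise formula for `stacked`. -/
lemma stacked_apply {n z h : ℕ} (α : Fin n → Fin z → ℝ)
    (v : Fin n → Fin h → ℝ) (j : Fin z) (p : Fin h) :
    stacked α v (j, p) = (1 / n : ℝ) * ∑ i, α i j * v i p := by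
  simp [stacked, wavg, Finset.sum_apply]

/-- Componentwise formula for `mulVec` of `diagPlusRow`. -/
lemma diagPlusRow_mulVec_apply {z h h' : ℕ} (M : Matrix (Fin h) (Fin h') ℝ)
    (Mbar : Fin z → Matrix (Fin h) (Fin z × Fin h') ℝ)
    (v : Fin z × Fin h' → ℝ) (j : Fin z) (p : Fin h) :
    (diagPlusRow M Mbar).mulVec v (j, p)
      = (∑ q, M p q * v (j, q)) + (Mbar j).mulVec v p := by
  simp [diagPlusRow, Matrix.mulVec, dotProduct, Fintype.sum_prod_type,
    add_mul, Finset.sum_add_distrib, ite_mul, zero_mul, Finset.sum_ite_eq,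
    Finset.mem_univ]

theorem deep_state_dynamics
    {n z hx hu : ℕ} (hn : 1 ≤ n) (α : Fin n → Fin z → ℝ)
    (horth : ∀ j k : Fin z,
      (1 / n : ℝ) * ∑ i, α i j * α i k = if j = k then 1 else 0)
    (A : Matrix (Fin hx) (Fin hx) ℝ) (B : Matrix (Fin hx) (Fin hu) ℝ)
    (Abar : Fin z → Matrix (Fin hx) (Fin z × Fin hx) ℝ)
    (Bbar : Fin z → Matrix (Fin hx) (Fin z × Fin hu) ℝ)
    (x w x' : Fin n → Fin hx → ℝ) (u : Fin n → Fin hu → ℝ)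
    (hdyn : ∀ i, x' i
      = A.mulVec (x i) + B.mulVec (u i)
        + ∑ j, α i j • ((Abar j).mulVec (stacked α x) + (Bbar j).mulVec (stacked α u))
        + w i) :
    stacked α x'
      = (diagPlusRow A Abar).mulVec (stacked α x)
        + (diagPlusRow B Bbar).mulVec (stacked α u)
        + stacked α w := by
  funext jp
  obtain ⟨j, p⟩ := jp
  -- generic sum swap lemma
  have gen : ∀ {m : ℕ} (g : Fin m → ℝ) (f : Fin n → Fin m → ℝ),
      (1 / n : ℝ) * ∑ i, α i j * ∑ r, g r * f i r
        = ∑ r, g r * ((1 / n : ℝ) * ∑ i, α i j * f i r) := by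
    intro m g f
    simp only [Finset.mul_sum]
    rw [Finset.sum_comm]
    exact Finset.sum_congr rfl fun r _ => Finset.sum_congr rfl fun i _ => by ring
  set X := stacked α x with hX
  set U := stacked α u with hU
  set c : Fin z → ℝ := fun k => (Abar k).mulVec X p + (Bbar k).mulVec U p with hc
  have lhs_eq : stacked α x' (j, p)
      = (1 / n : ℝ) * ∑ i, α i j *
          ((∑ r, A p r * x i r) + (∑ r, B p r * u i r)
            + (∑ k, c k * α i k) + w i p) := by
    rw [stacked_apply]
    congr 1
    apply Finset.sum_congr rfl
    intro i _
    rw [hdyn i]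
    simp only [Pi.add_apply, Finset.sum_apply, Pi.smul_apply, smul_eq_mul,
      Matrix.mulVec, dotProduct]
    congr 2
    · congr 1
      apply Finset.sum_congr rfl
      intro k _
      simp only [hc, Matrix.mulVec, dotProduct]
      ring
  rw [lhs_eq]
  have split : (1 / n : ℝ) * ∑ i, α i j *
          ((∑ r, A p r * x i r) + (∑ r, B p r * u i r)
            + (∑ k, c k * α i k) + w i p)
      = (1 / n : ℝ) * (∑ i, α i j * ∑ r, A p r * x i r)
        + (1 / n : ℝ) * (∑ i, α i j * ∑ r, B p r * u i r)
        + (1 / n : ℝ) * (∑ i, α i j * ∑ k, c k * α i k)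
        + (1 / n : ℝ) * (∑ i, α i j * w i p) := by
    simp only [mul_add, Finset.sum_add_distrib]
  rw [split]
  have T1 : (1 / n : ℝ) * (∑ i, α i j * ∑ r, A p r * x i r)
      = ∑ r, A p r * X (j, r) := by
    rw [gen]
    exact Finset.sum_congr rfl fun r _ => by rw [hX, stacked_apply]
  have T2 : (1 / n : ℝ) * (∑ i, α i j * ∑ r, B p r * u i r)
      = ∑ r, B p r * U (j, r) := by
    rw [gen]
    exact Finset.sum_congr rfl fun r _ => by rw [hU, stacked_apply]
  have T3 : (1 / n : ℝ) * (∑ i, α i j * ∑ k, c k * α i k) = c j := by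
    rw [gen fun k => c k]
    have : ∀ k, c k * ((1 / n : ℝ) * ∑ i, α i j * α i k)
        = c k * (if j = k then 1 else 0) := fun k => by rw [horth]
    rw [Finset.sum_congr rfl fun k _ => this k]
    simp
  have T4 : (1 / n : ℝ) * (∑ i, α i j * w i p) = stacked α w (j, p) := by
    rw [stacked_apply]
  rw [T1, T2, T3, T4]
  simp only [Pi.add_apply, diagPlusRow_mulVec_apply, hc]
  ring
end

section
/- (Decomposition of the per-step quadratic cost.) Let n, z, h_x, h_u ∈ ℕ with n ≥ 1, and let α : {1,…,n} → {1,…,z} → ℝ satisfy the orthonormality condition (1/n)·Σ_{i=1}^n α^{i,j}·α^{i,k} = 1 if j = k and 0 if j ≠ k. Let Q be an h_x × h_x real matrix, R an h_u × h_u real matrix, Q̄ a (z·h_x) × (z·h_x) real matrix, and R̄ a (z·h_u) × (z·h_u) real matrix. Define 𝐐̄ = diag(Q,…,Q) + Q̄ and 𝐑̄ = diag(R,…,R) + R̄. Given vectors x^i ∈ ℝ^{h_x} and u^i ∈ ℝ^{h_u} for i ∈ {1,…,n}, with weighted averages x̄^j, ū^j, stacked deep states 𝐱̄, 𝐮̄,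 and deviations Δx^i, Δu^i, the average per-step cost decomposes as: (1/n)·Σ_{i=1}^n [(x^i)ᵀQx^i + (u^i)ᵀRu^i] + 𝐱̄ᵀQ̄𝐱̄ + 𝐮̄ᵀR̄𝐮̄ = (1/n)·Σ_{i=1}^n [(Δx^i)ᵀQΔx^i + (Δu^i)ᵀRΔu^i] + 𝐱̄ᵀ𝐐̄𝐱̄ + 𝐮̄ᵀ𝐑̄𝐮̄. -/
/-!
STATEMENT 9 (Decomposition of the per-step quadratic cost): with `𝐐̄ = diag(Q,…,Q) + Q̄`
and `𝐑̄ = diag(R,…,R) + R̄`,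
`(1/n) Σ_i [(xⁱ)ᵀQxⁱ + (uⁱ)ᵀRuⁱ] + 𝐱̄ᵀQ̄𝐱̄ + 𝐮̄ᵀR̄𝐮̄
  = (1/n) Σ_i [(Δxⁱ)ᵀQΔxⁱ + (Δuⁱ)ᵀRΔuⁱ] + 𝐱̄ᵀ𝐐̄𝐱̄ + 𝐮̄ᵀ𝐑̄𝐮̄`.
-/

open Matrix Finset

/-- The z-fold block-diagonal matrix `diag(M,…,M)`. -/
def zBlockDiag {z h : ℕ} (M : Matrix (Fin h) (Fin h) ℝ) :
    Matrix (Fin z × Fin h) (Fin z × Fin h) ℝ :=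
  Matrix.of fun p q => if p.1 = q.1 then M p.2 q.2 else 0


lemma dotProduct_sum' {m : Type*} [Fintype m] {ι : Type*} (s : Finset ι)
    (u : m → ℝ) (f : ι → m → ℝ) :
    u ⬝ᵥ (∑ i ∈ s, f i) = ∑ i ∈ s, u ⬝ᵥ f i := by
  simp only [dotProduct, Finset.sum_apply, Finset.mul_sum]
  rw [Finset.sum_comm]

lemma sum_dotProduct' {m : Type*} [Fintype m] {ι : Type*} (s : Finset ι)
    (u : m → ℝ) (f : ι → m → ℝ) :
    (∑ i ∈ s, f i) ⬝ᵥ u = ∑ i ∈ s, f i ⬝ᵥ u := by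
  simp only [dotProduct, Finset.sum_apply, Finset.sum_mul]
  rw [Finset.sum_comm]

lemma mulVec_sum' {m : Type*} [Fintype m] {ι : Type*} (s : Finset ι)
    (M : Matrix m m ℝ) (f : ι → m → ℝ) :
    M.mulVec (∑ i ∈ s, f i) = ∑ i ∈ s, M.mulVec (f i) := by
  funext a
  simp only [Matrix.mulVec, dotProduct, Finset.sum_apply, Finset.mul_sum]
  rw [Finset.sum_comm]

lemma sum_alpha_dev {n z h : ℕ} (hn : 1 ≤ n) (α : Fin n → Fin z → ℝ)
    (v : Fin n → Fin h → ℝ) (j : Fin z)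
    (horth : ∀ j k : Fin z,
      (1 / n : ℝ) * ∑ i, α i j * α i k = if j = k then 1 else 0) :
    ∑ i, α i j • dev α v i = 0 := by
  have hn0 : (n : ℝ) ≠ 0 := by positivity
  simp only [dev, smul_sub, Finset.sum_sub_distrib]
  have h1 : ∑ i, α i j • v i = (n : ℝ) • wavg α v j := by
    simp [wavg, smul_smul, one_div, mul_inv_cancel₀ hn0]
  have h2 : ∑ i : Fin n, α i j • ∑ k, α i k • wavg α v k = (n : ℝ) • wavg α v j := by
    have : ∀ i : Fin n, α i j • ∑ k, α i k • wavg α v k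
        = ∑ k, (α i j * α i k) • wavg α v k := by
      intro i
      rw [Finset.smul_sum]
      simp [smul_smul]
    simp only [this]
    rw [Finset.sum_comm]
    have : ∀ k : Fin z, ∑ i, (α i j * α i k) • wavg α v k
        = ((n : ℝ) * ((1 / n : ℝ) * ∑ i, α i j * α i k)) • wavg α v k := by
      intro k
      rw [← Finset.sum_smul]
      congr 1
      field_simp
    simp only [this, horth]
    rw [Finset.sum_eq_single j]
    · simp
    · intro k _ hk; simp [Ne.symm hk]
    · simp
  rw [h1, h2, sub_self]

lemma stacked_quad {n z h : ℕ} (α : Fin n → Fin z → ℝ)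
    (M : Matrix (Fin h) (Fin h) ℝ) (v : Fin n → Fin h → ℝ) :
    (stacked α v) ⬝ᵥ (zBlockDiag M).mulVec (stacked α v)
      = ∑ j, (wavg α v j) ⬝ᵥ M.mulVec (wavg α v j) := by
  simp only [dotProduct, Matrix.mulVec, zBlockDiag, Fintype.sum_prod_type, stacked,
    Matrix.of_apply]
  refine Finset.sum_congr rfl fun j _ => ?_
  refine Finset.sum_congr rfl fun a _ => ?_
  congr 1
  rw [Finset.sum_eq_single j]
  · simp [dotProduct]
  · intro k _ hk; simp [hk.symm]
  · simp

lemma key_decomp {n z h : ℕ} (hn : 1 ≤ n) (α : Fin n → Fin z → ℝ)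
    (horth : ∀ j k : Fin z,
      (1 / n : ℝ) * ∑ i, α i j * α i k = if j = k then 1 else 0)
    (M : Matrix (Fin h) (Fin h) ℝ) (v : Fin n → Fin h → ℝ) :
    (1 / n : ℝ) * ∑ i, (v i) ⬝ᵥ M.mulVec (v i)
      = (1 / n : ℝ) * ∑ i, (dev α v i) ⬝ᵥ M.mulVec (dev α v i)
        + (stacked α v) ⬝ᵥ (zBlockDiag M).mulVec (stacked α v) := by
  have hn0 : (n : ℝ) ≠ 0 := by positivity
  set w := wavg α v with hw
  have hvi : ∀ i, v i = dev α v i + ∑ j, α i j • w j := by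
    intro i; simp [dev, hw]
  have expand : ∀ i, (v i) ⬝ᵥ M.mulVec (v i)
      = (dev α v i) ⬝ᵥ M.mulVec (dev α v i)
        + (dev α v i) ⬝ᵥ M.mulVec (∑ j, α i j • w j)
        + (∑ j, α i j • w j) ⬝ᵥ M.mulVec (dev α v i)
        + (∑ j, α i j • w j) ⬝ᵥ M.mulVec (∑ j, α i j • w j) := by
    intro i
    conv_lhs => rw [hvi i]
    rw [Matrix.mulVec_add, dotProduct_add, add_dotProduct, add_dotProduct]
    ring
  have hzero : ∀ j : Fin z, ∑ i, α i j • dev α v i = 0 :=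
    fun j => sum_alpha_dev hn α v j horth
  have cross1 : ∑ i, (dev α v i) ⬝ᵥ M.mulVec (∑ j, α i j • w j) = 0 := by
    have e : ∀ i, (dev α v i) ⬝ᵥ M.mulVec (∑ j, α i j • w j)
        = ∑ j, (α i j • dev α v i) ⬝ᵥ M.mulVec (w j) := by
      intro i
      rw [mulVec_sum', dotProduct_sum']
      refine Finset.sum_congr rfl fun j _ => ?_
      rw [Matrix.mulVec_smul, dotProduct_smul, smul_dotProduct]
    simp only [e]
    rw [Finset.sum_comm]
    refine Finset.sum_eq_zero fun j _ => ?_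
    rw [← sum_dotProduct', hzero j, zero_dotProduct]
  have cross2 : ∑ i, (∑ j, α i j • w j) ⬝ᵥ M.mulVec (dev α v i) = 0 := by
    have e : ∀ i, (∑ j, α i j • w j) ⬝ᵥ M.mulVec (dev α v i)
        = ∑ j, (w j) ⬝ᵥ M.mulVec (α i j • dev α v i) := by
      intro i
      rw [sum_dotProduct']
      refine Finset.sum_congr rfl fun j _ => ?_
      simp [Matrix.mulVec_smul, smul_dotProduct, dotProduct_smul]
    simp only [e]
    rw [Finset.sum_comm]
    refine Finset.sum_eq_zero fun j _ => ?_
    rw [← dotProduct_sum', ← mulVec_sum', hzero j, Matrix.mulVec_zero, dotProduct_zero]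
  have quad : (1 / n : ℝ) * ∑ i, (∑ j, α i j • w j) ⬝ᵥ M.mulVec (∑ j, α i j • w j)
      = ∑ j, (w j) ⬝ᵥ M.mulVec (w j) := by
    have e : ∀ i, (∑ j, α i j • w j) ⬝ᵥ M.mulVec (∑ k, α i k • w k)
        = ∑ j, ∑ k, (α i j * α i k) * ((w j) ⬝ᵥ M.mulVec (w k)) := by
      intro i
      rw [sum_dotProduct']
      refine Finset.sum_congr rfl fun j _ => ?_
      rw [mulVec_sum', dotProduct_sum']
      refine Finset.sum_congr rfl fun k _ => ?_
      rw [Matrix.mulVec_smul, dotProduct_smul, smul_dotProduct]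
      simp [smul_smul, mul_comm, mul_assoc, mul_left_comm]
    simp only [e]
    rw [Finset.sum_comm]
    have : ∀ j : Fin z, ∑ i : Fin n, ∑ k, (α i j * α i k) * ((w j) ⬝ᵥ M.mulVec (w k))
        = ∑ k, (∑ i, α i j * α i k) * ((w j) ⬝ᵥ M.mulVec (w k)) := by
      intro j
      rw [Finset.sum_comm]
      exact Finset.sum_congr rfl fun k _ => (Finset.sum_mul ..).symm
    simp only [this, Finset.mul_sum]
    refine Finset.sum_congr rfl fun j _ => ?_
    have h2 : ∀ k, (1 / n : ℝ) * ((∑ i, α i j * α i k) * ((w j) ⬝ᵥ M.mulVec (w k)))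
        = (if j = k then 1 else 0) * ((w j) ⬝ᵥ M.mulVec (w k)) := by
      intro k
      rw [← mul_assoc, horth j k]
    simp only [h2]
    rw [Finset.sum_eq_single j]
    · simp
    · intro k _ hk; simp [Ne.symm hk]
    · simp
  simp only [expand]
  rw [Finset.sum_add_distrib, Finset.sum_add_distrib, Finset.sum_add_distrib,
    cross1, cross2, stacked_quad]
  rw [mul_add, mul_add, mul_add, quad]
  ring

theorem per_step_quadratic_cost_decomposition
    {n z hx hu : ℕ} (hn : 1 ≤ n) (α : Fin n → Fin z → ℝ)
    (horth : ∀ j k : Fin z,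
      (1 / n : ℝ) * ∑ i, α i j * α i k = if j = k then 1 else 0)
    (Q : Matrix (Fin hx) (Fin hx) ℝ) (R : Matrix (Fin hu) (Fin hu) ℝ)
    (Qbar : Matrix (Fin z × Fin hx) (Fin z × Fin hx) ℝ)
    (Rbar : Matrix (Fin z × Fin hu) (Fin z × Fin hu) ℝ)
    (x : Fin n → Fin hx → ℝ) (u : Fin n → Fin hu → ℝ) :
    (1 / n : ℝ) * ∑ i, ((x i) ⬝ᵥ Q.mulVec (x i) + (u i) ⬝ᵥ R.mulVec (u i))
      + (stacked α x) ⬝ᵥ Qbar.mulVec (stacked α x)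
      + (stacked α u) ⬝ᵥ Rbar.mulVec (stacked α u)
    = (1 / n : ℝ) * ∑ i,
          ((dev α x i) ⬝ᵥ Q.mulVec (dev α x i) + (dev α u i) ⬝ᵥ R.mulVec (dev α u i))
      + (stacked α x) ⬝ᵥ (zBlockDiag Q + Qbar).mulVec (stacked α x)
      + (stacked α u) ⬝ᵥ (zBlockDiag R + Rbar).mulVec (stacked α u) := by
  rw [Matrix.add_mulVec, dotProduct_add, Matrix.add_mulVec, dotProduct_add]
  have hx := key_decomp hn α horth Q x
  have hu := key_decomp hn α horth R u
  have hsum : (1 / n : ℝ) * ∑ i, ((x i) ⬝ᵥ Q.mulVec (x i) + (u i) ⬝ᵥ R.mulVec (u i))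
      = (1 / n : ℝ) * ∑ i, (x i) ⬝ᵥ Q.mulVec (x i)
        + (1 / n : ℝ) * ∑ i, (u i) ⬝ᵥ R.mulVec (u i) := by
    rw [Finset.sum_add_distrib, mul_add]
  have hsum' : (1 / n : ℝ) * ∑ i,
        ((dev α x i) ⬝ᵥ Q.mulVec (dev α x i) + (dev α u i) ⬝ᵥ R.mulVec (dev α u i))
      = (1 / n : ℝ) * ∑ i, (dev α x i) ⬝ᵥ Q.mulVec (dev α x i)
        + (1 / n : ℝ) * ∑ i, (dev α u i) ⬝ᵥ R.mulVec (dev α u i) := by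
    rw [Finset.sum_add_distrib, mul_add]
  rw [hsum, hsum', hx, hu]
  ring
end
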